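/- Let X and Y be measurable spaces, let μ and μ' be probability measures on X, let κ and κ' be Markov kernels from X to Y, and let ε₁, ε₂, δ₁, δ₂ ≥ 0. Suppose (i) for every measurable set A ⊆ X, μ(A) ≤ e^{ε₁}·μ'(A) + δ₁, and (ii) for every x ∈ X and every measurable set B ⊆ Y, κ(x)(B) ≤ e^{ε₂}·κ'(x)(B) + δ₂. Then for every measurable set B ⊆ Y, the composed measure satisfies (μ.bind κ)(B) ≤ e^{ε₁+ε₂}·(μ'.bind κ')(B) + δ₁ + δ₂. -/

import Mathlib

open MeasureTheory ProbabilityTheory Set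

lemma dp_lintegral_of_le_one {X : Type*} [MeasurableSpace X]
    (μ μ' : Measure X) (E d : ENNReal)
    (h : ∀ A : Set X, MeasurableSet A → μ A ≤ E * μ' A + d)
    (g : X → ENNReal) (hg : Measurable g) (hg1 : ∀ x, g x ≤ 1) :
    ∫⁻ x, g x ∂μ ≤ E * (∫⁻ x, g x ∂μ') + d := by
  have hfin : ∀ x, g x ≠ ⊤ := fun x => (lt_of_le_of_lt (hg1 x) ENNReal.one_lt_top).ne
  set f : X → ℝ := fun x => (g x).toReal with hf
  have hmf : Measurable f := hg.ennreal_toReal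
  have hofR : ∀ x, ENNReal.ofReal (f x) = g x := fun x => ENNReal.ofReal_toReal (hfin x)
  have hset : ∀ t : ℝ, 0 ≤ t → {a : X | t < f a} = {a : X | ENNReal.ofReal t < g a} := by
    intro t ht
    ext a
    simp only [mem_setOf_eq]
    rw [ENNReal.ofReal_lt_iff_lt_toReal ht (hfin a)]
  have layμ : ∫⁻ x, g x ∂μ = ∫⁻ t in Ioi (0:ℝ), μ {a : X | t < f a} := by
    rw [← lintegral_eq_lintegral_meas_lt μ (Filter.Eventually.of_forall fun x => ENNReal.toReal_nonneg)
      hmf.aemeasurable]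
    exact lintegral_congr fun x => (hofR x).symm
  have layμ' : ∫⁻ x, g x ∂μ' = ∫⁻ t in Ioi (0:ℝ), μ' {a : X | t < f a} := by
    rw [← lintegral_eq_lintegral_meas_lt μ' (Filter.Eventually.of_forall fun x => ENNReal.toReal_nonneg)
      hmf.aemeasurable]
    exact lintegral_congr fun x => (hofR x).symm
  rw [layμ, layμ']
  -- split Ioi 0 = Ioc 0 1 ∪ Ioi 1
  have hsplit : Ioi (0:ℝ) = Ioc (0:ℝ) 1 ∪ Ioi (1:ℝ) := (Ioc_union_Ioi_eq_Ioi zero_le_one).symm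
  have hmeas_t : ∀ ν : Measure X, Measurable fun t : ℝ => ν {a : X | t < f a} := by
    intro ν
    have : Antitone fun t : ℝ => ν {a : X | t < f a} := by
      intro s t hst
      exact measure_mono fun a ha => lt_of_le_of_lt hst ha
    exact this.measurable
  have hdisj : Disjoint (Ioc (0:ℝ) 1) (Ioi (1:ℝ)) := by
    rw [Set.disjoint_left]
    intro t ht ht'
    exact absurd ht.2 (not_le_of_gt ht')
  conv_lhs => rw [hsplit, lintegral_union measurableSet_Ioi hdisj]
  have hzero : ∀ ν : Measure X, ∫⁻ t in Ioi (1:ℝ), ν {a : X | t < f a} = 0 := by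
    intro ν
    have hc : ∫⁻ t in Ioi (1:ℝ), ν {a : X | t < f a} = ∫⁻ _ in Ioi (1:ℝ), (0:ENNReal) := by
      apply setLIntegral_congr_fun measurableSet_Ioi
      intro t ht
      have hempty : {a : X | t < f a} = ∅ := by
        ext a
        simp only [mem_setOf_eq, mem_empty_iff_false, iff_false, not_lt]
        have : f a ≤ 1 := by
          rw [hf]
          exact ENNReal.toReal_le_of_le_ofReal zero_le_one (by simpa using hg1 a)
        linarith [mem_Ioi.mp ht]
      simp [hempty]
    rw [hc, lintegral_zero]
  rw [hzero μ, add_zero]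
  calc ∫⁻ t in Ioc (0:ℝ) 1, μ {a : X | t < f a}
      ≤ ∫⁻ t in Ioc (0:ℝ) 1, (E * μ' {a : X | t < f a} + d) := by
        apply lintegral_mono
        intro t
        exact h _ (hmf measurableSet_Ioi)
    _ = E * (∫⁻ t in Ioc (0:ℝ) 1, μ' {a : X | t < f a}) + d * volume (Ioc (0:ℝ) 1) := by
        rw [lintegral_add_right _ measurable_const, lintegral_const_mul _ (hmeas_t μ'),
          setLIntegral_const]
    _ ≤ E * (∫⁻ t in Ioi (0:ℝ), μ' {a : X | t < f a}) + d * volume (Ioc (0:ℝ) 1) := by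
        gcongr
        exact Ioc_subset_Ioi_self
    _ = E * (∫⁻ t in Ioi (0:ℝ), μ' {a : X | t < f a}) + d := by
        rw [Real.volume_Ioc]
        norm_num

/-- Theorem 3.9 (Sequential Composition): composing an (ε₁,δ₁)-indistinguishable
distribution over first-stage views with (ε₂,δ₂)-indistinguishable kernels gives
(ε₁+ε₂, δ₁+δ₂)-indistinguishable composed distributions. -/
theorem sequential_composition {X Y : Type*} [MeasurableSpace X] [MeasurableSpace Y]
    (μ μ' : Measure X) [IsProbabilityMeasure μ] [IsProbabilityMeasure μ']
    (κ κ' : Kernel X Y) [IsMarkovKernel κ] [IsMarkovKernel κ']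
    (ε₁ ε₂ δ₁ δ₂ : ℝ) (hε₁ : 0 ≤ ε₁) (hε₂ : 0 ≤ ε₂) (hδ₁ : 0 ≤ δ₁) (hδ₂ : 0 ≤ δ₂)
    (h₁ : ∀ A : Set X, MeasurableSet A →
      μ A ≤ ENNReal.ofReal (Real.exp ε₁) * μ' A + ENNReal.ofReal δ₁)
    (h₂ : ∀ x : X, ∀ B : Set Y, MeasurableSet B →
      κ x B ≤ ENNReal.ofReal (Real.exp ε₂) * κ' x B + ENNReal.ofReal δ₂) :
    ∀ B : Set Y, MeasurableSet B →
      (μ.bind fun x => κ x) B ≤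
        ENNReal.ofReal (Real.exp (ε₁ + ε₂)) * (μ'.bind fun x => κ' x) B
          + ENNReal.ofReal (δ₁ + δ₂) := by
  intro B hB
  rw [Measure.bind_apply hB (Kernel.measurable κ).aemeasurable,
    Measure.bind_apply hB (Kernel.measurable κ').aemeasurable]
  set g : X → ENNReal := fun x => κ x B - ENNReal.ofReal δ₂ with hgdef
  have hgmeas : Measurable g := (Kernel.measurable_coe κ hB).sub measurable_const
  have hg1 : ∀ x, g x ≤ 1 := fun x => le_trans (tsub_le_self) (prob_le_one)
  have hgle : ∀ x, g x ≤ ENNReal.ofReal (Real.exp ε₂) * κ' x B :=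
    fun x => tsub_le_iff_right.mpr (h₂ x B hB)
  have step1 : ∫⁻ x, κ x B ∂μ ≤ (∫⁻ x, g x ∂μ) + ENNReal.ofReal δ₂ := by
    calc ∫⁻ x, κ x B ∂μ ≤ ∫⁻ x, (g x + ENNReal.ofReal δ₂) ∂μ :=
          lintegral_mono fun x => le_tsub_add
      _ = (∫⁻ x, g x ∂μ) + ENNReal.ofReal δ₂ := by
          rw [lintegral_add_right _ measurable_const, lintegral_const, measure_univ, mul_one]
  have step2 : ∫⁻ x, g x ∂μ ≤ ENNReal.ofReal (Real.exp ε₁) * (∫⁻ x, g x ∂μ') + ENNReal.ofReal δ₁ :=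
    dp_lintegral_of_le_one μ μ' _ _ h₁ g hgmeas hg1
  have step3 : ∫⁻ x, g x ∂μ' ≤ ENNReal.ofReal (Real.exp ε₂) * (∫⁻ x, κ' x B ∂μ') := by
    rw [← lintegral_const_mul _ (Kernel.measurable_coe κ' hB)]
    exact lintegral_mono hgle
  calc ∫⁻ x, κ x B ∂μ ≤ (∫⁻ x, g x ∂μ) + ENNReal.ofReal δ₂ := step1
    _ ≤ (ENNReal.ofReal (Real.exp ε₁) * (∫⁻ x, g x ∂μ') + ENNReal.ofReal δ₁) + ENNReal.ofReal δ₂ := by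
        gcongr
    _ ≤ (ENNReal.ofReal (Real.exp ε₁) * (ENNReal.ofReal (Real.exp ε₂) * (∫⁻ x, κ' x B ∂μ'))
          + ENNReal.ofReal δ₁) + ENNReal.ofReal δ₂ := by gcongr
    _ = ENNReal.ofReal (Real.exp (ε₁ + ε₂)) * (∫⁻ x, κ' x B ∂μ') + ENNReal.ofReal (δ₁ + δ₂) := by
        rw [Real.exp_add, ENNReal.ofReal_mul (Real.exp_nonneg _), ENNReal.ofReal_add hδ₁ hδ₂,
          mul_assoc, add_assoc]
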